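/- The subspace Z is invariant under A and under 1 − A (i.e. A(Z) ⊆ Z and (1 − A)(Z) ⊆ Z), and the restrictions A|_Z and (1 − A)|_Z are injective operators on Z whose ranges are dense in Z. -/

import Mathlib

set_option maxHeartbeats 800000
set_option synthInstance.maxHeartbeats 400000

open scoped InnerProductSpace

lemma my_helper {Y : Type*} [NormedAddCommGroup Y] [InnerProductSpace ℂ Y] [CompleteSpace Y]
    (B : Y →L[ℂ] Y) (hsym : ∀ x y : Y, ⟪B x, y⟫_ℂ = ⟪x, B y⟫_ℂ)
    (hz : ∀ x : Y, ⟪B x, x⟫_ℂ = 0 → B x = 0)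
    (K : Submodule ℂ Y) (hK : ∀ u ∈ K, B u ∈ K) (hkerK : ∀ x : Y, B x = 0 → x ∈ K) :
    Submodule.map (B : Y →ₗ[ℂ] Y) Kᗮ ≤ Kᗮ ∧ Set.InjOn ⇑B (Kᗮ : Set Y) ∧
      (Submodule.map (B : Y →ₗ[ℂ] Y) Kᗮ).topologicalClosure = Kᗮ := by
  have hmap : Submodule.map (B : Y →ₗ[ℂ] Y) Kᗮ ≤ Kᗮ := by
    rintro _ ⟨z, hzK, rfl⟩
    intro u hu
    rw [ContinuousLinearMap.coe_coe, ← hsym]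
    exact hzK _ (hK u hu)
  have hinjker : ∀ x ∈ Kᗮ, B x = 0 → x = 0 := by
    intro x hx hBx
    exact inner_self_eq_zero.mp (hx x (hkerK x hBx))
  refine ⟨hmap, ?_, ?_⟩
  · intro x hx y hy hxy
    have h1 : B (x - y) = 0 := by rw [map_sub, hxy, sub_self]
    exact sub_eq_zero.mp (hinjker _ (sub_mem hx hy) h1)
  · refine le_antisymm (Submodule.topologicalClosure_minimal _ hmap K.isClosed_orthogonal) ?_
    have key : (Submodule.map (B : Y →ₗ[ℂ] Y) Kᗮ)ᗮ ≤ Kᗮᗮ := by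
      haveI : CompleteSpace Kᗮ := K.isClosed_orthogonal.completeSpace_coe
      intro w hw
      obtain ⟨w₁, hw₁, w₂, hw₂, rfl⟩ := Kᗮ.exists_add_mem_mem_orthogonal w
      have hB1 : B w₁ ∈ Submodule.map (B : Y →ₗ[ℂ] Y) Kᗮ := ⟨w₁, hw₁, rfl⟩
      have h2 : ⟪B w₁, w₂⟫_ℂ = 0 := hw₂ _ (hmap hB1)
      have h3 : ⟪B w₁, w₁ + w₂⟫_ℂ = 0 := hw _ hB1
      have h4 : ⟪B w₁, w₁⟫_ℂ = 0 := by
        rw [inner_add_right, h2, add_zero] at h3; exact h3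
      have h5 : w₁ = 0 := hinjker _ hw₁ (hz _ h4)
      rw [h5, zero_add]
      exact hw₂
    calc Kᗮ = Kᗮᗮᗮ := (Submodule.triorthogonal_eq_orthogonal (K := K)).symm
      _ ≤ (Submodule.map (B : Y →ₗ[ℂ] Y) Kᗮ)ᗮᗮ := Submodule.orthogonal_le key
      _ = (Submodule.map (B : Y →ₗ[ℂ] Y) Kᗮ).topologicalClosure :=
        (Submodule.map (B : Y →ₗ[ℂ] Y) Kᗮ).orthogonal_orthogonal_eq_closure

variable {H₀ H₁ : Type*} [NormedAddCommGroup H₀] [InnerProductSpace ℂ H₀] [CompleteSpace H₀]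
  [NormedAddCommGroup H₁] [InnerProductSpace ℂ H₁] [CompleteSpace H₁]

/-- First coordinate projection `H₀ ⊕₂ H₁ → H₀` as a linear map. -/
noncomputable def P0 : WithLp 2 (H₀ × H₁) →ₗ[ℂ] H₀ :=
  (LinearMap.fst ℂ H₀ H₁) ∘ₗ (WithLp.linearEquiv 2 ℂ (H₀ × H₁)).toLinearMap

/-- `Z = (Y₀ ⊔ Y₁)ᗮ` is invariant under `A` and `1 - A`, and the restrictions of `A` and
`1 - A` to `Z` are injective with dense range in `Z`. -/
theorem stmt_5 (Y : Submodule ℂ (WithLp 2 (H₀ × H₁)))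
    (hY : IsClosed (Y : Set (WithLp 2 (H₀ × H₁))))
    (A : Y →L[ℂ] Y)
    (hA : ∀ x y : Y,
      ⟪A x, y⟫_ℂ = ⟪P0 (x : WithLp 2 (H₀ × H₁)), P0 (y : WithLp 2 (H₀ × H₁))⟫_ℂ)
    (Y₀ Y₁ Z : Submodule ℂ Y)
    (hY₀ : Y₀ = LinearMap.ker ((1 - A : Y →L[ℂ] Y) : Y →ₗ[ℂ] Y)) (hY₁ : Y₁ = LinearMap.ker (A : Y →ₗ[ℂ] Y))
    (hZ : Z = (Y₀ ⊔ Y₁)ᗮ) :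
    Submodule.map (A : Y →ₗ[ℂ] Y) Z ≤ Z ∧ Submodule.map ((1 - A : Y →L[ℂ] Y) : Y →ₗ[ℂ] Y) Z ≤ Z ∧
    Set.InjOn ⇑A (Z : Set Y) ∧ Set.InjOn ⇑(1 - A : Y →L[ℂ] Y) (Z : Set Y) ∧
    (Submodule.map (A : Y →ₗ[ℂ] Y) Z).topologicalClosure = Z ∧
    (Submodule.map ((1 - A : Y →L[ℂ] Y) : Y →ₗ[ℂ] Y) Z).topologicalClosure = Z := by
  haveI : CompleteSpace Y := hY.completeSpace_coe
  -- P0 coe is fst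
  have hP0 : ∀ x : Y, P0 (x : WithLp 2 (H₀ × H₁)) = (x : WithLp 2 (H₀ × H₁)).fst := fun _ => rfl
  -- symmetry of A
  have hsymA : ∀ x y : Y, ⟪A x, y⟫_ℂ = ⟪x, A y⟫_ℂ := by
    intro x y
    calc ⟪A x, y⟫_ℂ = ⟪P0 (x : WithLp 2 (H₀ × H₁)), P0 (y : WithLp 2 (H₀ × H₁))⟫_ℂ := hA x y
      _ = starRingEnd ℂ ⟪P0 (y : WithLp 2 (H₀ × H₁)), P0 (x : WithLp 2 (H₀ × H₁))⟫_ℂ :=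
          (inner_conj_symm _ _).symm
      _ = starRingEnd ℂ ⟪A y, x⟫_ℂ := by rw [hA]
      _ = ⟪x, A y⟫_ℂ := inner_conj_symm x (A y)
  -- B := 1 - A acts via second coordinates
  have hB : ∀ x y : Y, ⟪(1 - A : Y →L[ℂ] Y) x, y⟫_ℂ
      = ⟪(x : WithLp 2 (H₀ × H₁)).snd, (y : WithLp 2 (H₀ × H₁)).snd⟫_ℂ := by
    intro x y
    rw [ContinuousLinearMap.sub_apply, ContinuousLinearMap.one_apply, inner_sub_left, hA,
      hP0, hP0]
    have : ⟪x, y⟫_ℂ = ⟪(x : WithLp 2 (H₀ × H₁)), (y : WithLp 2 (H₀ × H₁))⟫_ℂ := rfl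
    rw [this, WithLp.prod_inner_apply]
    change ⟪(x : WithLp 2 (H₀ × H₁)).ofLp.1, (y : WithLp 2 (H₀ × H₁)).ofLp.1⟫_ℂ + _ - ⟪(x : WithLp 2 (H₀ × H₁)).ofLp.1, (y : WithLp 2 (H₀ × H₁)).ofLp.1⟫_ℂ = ⟪(x : WithLp 2 (H₀ × H₁)).ofLp.2, (y : WithLp 2 (H₀ × H₁)).ofLp.2⟫_ℂ
    ring
  -- positivity/kernel lemmas
  have hzA : ∀ x : Y, ⟪A x, x⟫_ℂ = 0 → A x = 0 := by
    intro x hx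
    rw [hA] at hx
    simp only [hP0] at hx
    rw [inner_self_eq_zero] at hx
    refine ext_inner_right ℂ (fun y => ?_)
    rw [hA]
    simp only [hP0, hx, inner_zero_left, ContinuousLinearMap.zero_apply]
  have hzB : ∀ x : Y, ⟪(1 - A : Y →L[ℂ] Y) x, x⟫_ℂ = 0 → (1 - A : Y →L[ℂ] Y) x = 0 := by
    intro x hx
    rw [hB, inner_self_eq_zero] at hx
    refine ext_inner_right ℂ (fun y => ?_)
    rw [hB, hx, inner_zero_left]
    simp
  have hsymB : ∀ x y : Y, ⟪(1 - A : Y →L[ℂ] Y) x, y⟫_ℂ = ⟪x, (1 - A : Y →L[ℂ] Y) y⟫_ℂ := by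
    intro x y
    calc ⟪(1 - A : Y →L[ℂ] Y) x, y⟫_ℂ
        = ⟪(x : WithLp 2 (H₀ × H₁)).snd, (y : WithLp 2 (H₀ × H₁)).snd⟫_ℂ := hB x y
      _ = starRingEnd ℂ ⟪(y : WithLp 2 (H₀ × H₁)).snd, (x : WithLp 2 (H₀ × H₁)).snd⟫_ℂ :=
          (inner_conj_symm _ _).symm
      _ = starRingEnd ℂ ⟪(1 - A : Y →L[ℂ] Y) y, x⟫_ℂ := by rw [hB]
      _ = ⟪x, (1 - A : Y →L[ℂ] Y) y⟫_ℂ := inner_conj_symm x ((1 - A : Y →L[ℂ] Y) y)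
  -- Y₀ and Y₁ behavior
  have hA0 : ∀ u ∈ Y₀, A u = u := by
    intro u hu
    rw [hY₀, LinearMap.mem_ker] at hu
    have : u - A u = 0 := by
      simpa [ContinuousLinearMap.sub_apply] using hu
    linear_combination (norm := module) -this
  have hA1 : ∀ u ∈ Y₁, A u = 0 := by
    intro u hu
    rw [hY₁, LinearMap.mem_ker] at hu
    exact hu
  set K := Y₀ ⊔ Y₁ with hK
  have hKA : ∀ u ∈ K, A u ∈ K := by
    intro u hu
    obtain ⟨u₀, h₀, u₁, h₁, rfl⟩ := Submodule.mem_sup.mp hu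
    rw [map_add, hA0 u₀ h₀, hA1 u₁ h₁, add_zero]
    exact Submodule.mem_sup_left h₀
  have hKB : ∀ u ∈ K, (1 - A : Y →L[ℂ] Y) u ∈ K := by
    intro u hu
    obtain ⟨u₀, h₀, u₁, h₁, rfl⟩ := Submodule.mem_sup.mp hu
    rw [map_add]
    have e0 : (1 - A : Y →L[ℂ] Y) u₀ = 0 := by
      simp [ContinuousLinearMap.sub_apply, hA0 u₀ h₀]
    have e1 : (1 - A : Y →L[ℂ] Y) u₁ = u₁ := by
      simp [ContinuousLinearMap.sub_apply, hA1 u₁ h₁]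
    rw [e0, e1, zero_add]
    exact Submodule.mem_sup_right h₁
  have hkerA : ∀ x : Y, A x = 0 → x ∈ K := fun x hx =>
    Submodule.mem_sup_right (by rw [hY₁]; exact hx)
  have hkerB : ∀ x : Y, (1 - A : Y →L[ℂ] Y) x = 0 → x ∈ K := fun x hx =>
    Submodule.mem_sup_left (by rw [hY₀]; exact hx)
  obtain ⟨hm1, hi1, hc1⟩ := my_helper A hsymA hzA K hKA hkerA
  obtain ⟨hm2, hi2, hc2⟩ := my_helper (1 - A) hsymB hzB K hKB hkerB
  rw [hZ]
  exact ⟨hm1, hm2, hi1, hi2, hc1, hc2⟩
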